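/- arXiv:2003.07800 — 2 statements merged into one kernel-verified Lean document; each statement's English description precedes it below -/
import Mathlib

section
/- If there is a homomorphism h from a Boolean conjunctive query p to a (possibly infinite) database D, then there is a contraction p_c of p (obtained from p by identifying variables) such that D satisfies p_c and every homomorphism from p_c to D is injective. -/
/-- A database / Boolean conjunctive query (as a set of atoms over its variables). -/
structure DB (A R C : Type) where
  un : Set (A × C)
  bin : Set (R × C × C)

def isHom {A R C C' : Type} (D1 : DB A R C) (D2 : DB A R C') (h : C → C') : Prop :=
  (∀ a c, (a, c) ∈ D1.un → (a, h c) ∈ D2.un) ∧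
  (∀ r c d, (r, c, d) ∈ D1.bin → (r, h c, h d) ∈ D2.bin)

/-- The image of a database/CQ under a map of its constants/variables.
For a surjection `σ`, `mapDB σ p` is the contraction of `p` induced by `σ`. -/
def mapDB {A R C C' : Type} (f : C → C') (D : DB A R C) : DB A R C' where
  un := {p | ∃ a c, (a, c) ∈ D.un ∧ p = (a, f c)}
  bin := {p | ∃ r c d, (r, c, d) ∈ D.bin ∧ p = (r, f c, f d)}

lemma isHom_mapDB {A R V C C' : Type} (p : DB A R V) (D : DB A R C') (f : V → C) (g : C → C') :
    isHom (mapDB f p) D g ↔ isHom p D (g ∘ f) := by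
  constructor
  · rintro ⟨h1, h2⟩
    exact ⟨fun a c hc => h1 a (f c) ⟨a, c, hc, rfl⟩,
      fun r c d hcd => h2 r (f c) (f d) ⟨r, c, d, hcd, rfl⟩⟩
  · rintro ⟨h1, h2⟩
    constructor
    · rintro a c ⟨a', c', hc', heq⟩
      simp only [Prod.mk.injEq] at heq
      obtain ⟨rfl, rfl⟩ := heq
      exact h1 _ _ hc'
    · rintro r c d ⟨r', c', d', hcd', heq⟩
      simp only [Prod.mk.injEq] at heq
      obtain ⟨rfl, rfl, rfl⟩ := heq
      exact h2 _ _ _ hcd'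

/-- If a Boolean CQ `p` maps homomorphically to a (possibly infinite) database `D`,
then some contraction `p_c` of `p` satisfies: `D ⊨ p_c` and every homomorphism from
`p_c` to `D` is injective. -/
theorem stmt2 {A R V C : Type} [Finite V] (p : DB A R V) (D : DB A R C)
    (hp : ∃ h : V → C, isHom p D h) :
    ∃ (V' : Type) (σ : V → V'), Function.Surjective σ ∧
      (∃ g : V' → C, isHom (mapDB σ p) D g) ∧
      (∀ g : V' → C, isHom (mapDB σ p) D g → Function.Injective g) := by
  classical
  obtain ⟨h, hh⟩ := hp
  set S : Set ℕ := {n | ∃ σ : V → Fin n, Function.Surjective σ ∧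
      ∃ g : Fin n → C, isHom (mapDB σ p) D g} with hS
  have hne : S.Nonempty := by
    haveI : Finite (Set.range h) := Set.finite_range h
    refine ⟨Nat.card (Set.range h),
      (Finite.equivFin (Set.range h)) ∘ Set.rangeFactorization h,
      (Finite.equivFin _).surjective.comp Set.rangeFactorization_surjective,
      Subtype.val ∘ (Finite.equivFin (Set.range h)).symm, ?_⟩
    rw [isHom_mapDB]
    have : (Subtype.val ∘ (Finite.equivFin (Set.range h)).symm) ∘
        ((Finite.equivFin (Set.range h)) ∘ Set.rangeFactorization h) = h := by
      funext x; exact congrArg Subtype.val ((Finite.equivFin (Set.range h)).symm_apply_apply _)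
    rwa [this]
  set n := sInf S with hn
  obtain ⟨σ, hσ, g0, hg0⟩ := Nat.sInf_mem hne
  refine ⟨Fin n, σ, hσ, ⟨g0, hg0⟩, ?_⟩
  intro g hg
  by_contra hginj
  -- factor g through its range
  haveI : Finite (Set.range g) := Set.finite_range g
  set m := Nat.card (Set.range g) with hm
  set e := Finite.equivFin (Set.range g)
  set τ : Fin n → Fin m := e ∘ Set.rangeFactorization g with hτ
  have hτs : Function.Surjective τ := e.surjective.comp Set.rangeFactorization_surjective
  have hgτ : (Subtype.val ∘ e.symm) ∘ τ = g := by
    funext x; exact congrArg Subtype.val (e.symm_apply_apply _)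
  have hmS : m ∈ S := by
    refine ⟨τ ∘ σ, hτs.comp hσ, Subtype.val ∘ e.symm, ?_⟩
    rw [isHom_mapDB]
    rw [isHom_mapDB] at hg
    rw [← Function.comp_assoc, hgτ]
    exact hg
  have hmn : m < n := by
    have hle : m ≤ n := by
      have := Nat.card_le_card_of_surjective _ (Set.rangeFactorization_surjective (f := g))
      rwa [Nat.card_eq_fintype_card (α := Fin n), Fintype.card_fin] at this
    rcases lt_or_eq_of_le hle with h' | h'
    · exact h'
    · exfalso
      haveI : Fintype (Set.range g) := Fintype.ofFinite _
      have hcard : Fintype.card (Fin n) = Fintype.card (Set.range g) := by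
        rw [Fintype.card_fin, ← Nat.card_eq_fintype_card]
        exact h'.symm
      have hbij : Function.Bijective (Set.rangeFactorization g) :=
        (Fintype.bijective_iff_surjective_and_card _).mpr
          ⟨Set.rangeFactorization_surjective, hcard⟩
      have : Function.Injective g := by
        have : g = Subtype.val ∘ Set.rangeFactorization g := by
          funext x; simp [Set.rangeFactorization]
        rw [this]
        exact Subtype.val_injective.comp hbij.injective
      exact hginj this
  exact absurd (Nat.sInf_le hmS) (not_le.mpr hmn)
end

section
/- A Boolean conjunctive query q is equivalent to some Boolean conjunctive query of tree width at most k (k ≥ 1) if and only if the core of q has tree width at most k, where tree width of a CQ is the tree width of the Gaifman graph of its canonical database. -/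
/-- The Gaifman graph of a database: constants are vertices, with an edge between two
distinct constants occurring together in a fact. -/
def gaifman {A R C : Type} (D : DB A R C) : SimpleGraph C where
  Adj x y := x ≠ y ∧ ∃ r, (r, x, y) ∈ D.bin ∨ (r, y, x) ∈ D.bin
  symm := by
    constructor
    rintro x y ⟨hxy, r, h⟩
    exact ⟨hxy.symm, r, h.symm⟩
  loopless := by
    constructor
    rintro x ⟨hxx, -⟩
    exact hxx rfl

def TreewidthLE {V : Type} (G : SimpleGraph V) (k : ℕ) : Prop :=
  ∃ (T : Type) (TG : SimpleGraph T) (μ : T → Finset V),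
    TG.IsTree ∧
    (∀ v, ∃ t, v ∈ μ t) ∧
    (∀ u v, G.Adj u v → ∃ t, u ∈ μ t ∧ v ∈ μ t) ∧
    (∀ v : V, (TG.induce {t | v ∈ μ t}).Connected) ∧
    (∀ t, (μ t).card ≤ k + 1)

/-- The subquery of `q` induced on the variable set `S`. -/
def restrictDB {A R C : Type} (D : DB A R C) (S : Set C) : DB A R C where
  un := {p | p ∈ D.un ∧ p.2 ∈ S}
  bin := {p | p ∈ D.bin ∧ p.2.1 ∈ S ∧ p.2.2 ∈ S}

/-- Two Boolean CQs are equivalent if every database satisfies one iff it satisfies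
the other. -/
def CQEquiv {A R V1 V2 : Type} (q1 : DB A R V1) (q2 : DB A R V2) : Prop :=
  ∀ (C : Type) (D : DB A R C), (∃ h, isHom q1 D h) ↔ (∃ h, isHom q2 D h)

/-- `S` induces a core of `q`: the induced subquery is equivalent to `q` and no proper
induced subquery of it is equivalent to it. -/
def IsCore {A R V : Type} (q : DB A R V) (S : Set V) : Prop :=
  CQEquiv q (restrictDB q S) ∧
  ∀ S' : Set V, S' ⊂ S → ¬ CQEquiv (restrictDB q S') (restrictDB q S)

/-! ### Auxiliary lemmas -/

section Homs

variable {A R : Type}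

lemma isHom_id {C : Type} (D : DB A R C) : isHom D D id :=
  ⟨fun _ _ h => h, fun _ _ _ h => h⟩

lemma isHom_comp {C1 C2 C3 : Type} {D1 : DB A R C1} {D2 : DB A R C2} {D3 : DB A R C3}
    {f : C1 → C2} {g : C2 → C3} (hf : isHom D1 D2 f) (hg : isHom D2 D3 g) :
    isHom D1 D3 (g ∘ f) :=
  ⟨fun a c h => hg.1 a (f c) (hf.1 a c h),
   fun r c d h => hg.2 r (f c) (f d) (hf.2 r c d h)⟩

lemma isHom_of_restrict {C C' : Type} {q : DB A R C} {S : Set C} {D : DB A R C'} {φ : C → C'}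
    (h : isHom q D φ) : isHom (restrictDB q S) D φ :=
  ⟨fun a c hc => h.1 a c hc.1, fun r c d hd => h.2 r c d hd.1⟩

lemma isHom_restrict_mono {C : Type} (q : DB A R C) {S' S : Set C} (hss : S' ⊆ S) :
    isHom (restrictDB q S') (restrictDB q S) id :=
  ⟨fun _ _ hc => ⟨hc.1, hss hc.2⟩, fun _ _ _ hd => ⟨hd.1, hss hd.2.1, hss hd.2.2⟩⟩

lemma cqequiv_restrict_univ {C : Type} (q : DB A R C) : CQEquiv q (restrictDB q Set.univ) := by
  intro C D
  constructor
  · rintro ⟨φ, h1, h2⟩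
    exact ⟨φ, fun a c hc => h1 a c hc.1, fun r c d hd => h2 r c d hd.1⟩
  · rintro ⟨φ, h1, h2⟩
    exact ⟨φ, fun a c hc => h1 a c ⟨hc, trivial⟩, fun r c d hd => h2 r c d ⟨hd, trivial, trivial⟩⟩

lemma exists_core {V : Type} [Finite V] (q : DB A R V) : ∃ S, IsCore q S := by
  classical
  set A := {S : Set V | CQEquiv q (restrictDB q S)} with hA
  have hfin : A.Finite := Set.toFinite A
  have hne : A.Nonempty := ⟨Set.univ, cqequiv_restrict_univ q⟩
  obtain ⟨S, hSA, hSmin⟩ := Set.Finite.exists_minimalFor Set.ncard A hfin hne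
  refine ⟨S, hSA, ?_⟩
  intro S' hss hcq
  have hS'A : S' ∈ A := by
    intro C D
    exact (hSA C D).trans (hcq C D).symm
  have hlt : S'.ncard < S.ncard := Set.ncard_lt_ncard hss (Set.toFinite S)
  exact absurd (hSmin hS'A hlt.le) (not_le.mpr hlt)

end Homs

/-! ### Adding pendant leaves to a tree -/

section AddLeaves

open SimpleGraph Sum

variable {T L : Type} (TG : SimpleGraph T) (t₀ : T)

def addLeaves : SimpleGraph (T ⊕ L) where
  Adj x y :=
    (∃ a b, TG.Adj a b ∧ x = inl a ∧ y = inl b) ∨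
    (∃ l : L, x = inl t₀ ∧ y = inr l) ∨ (∃ l : L, x = inr l ∧ y = inl t₀)
  symm := by
    constructor
    rintro x y (⟨a, b, hab, rfl, rfl⟩ | ⟨l, rfl, rfl⟩ | ⟨l, rfl, rfl⟩)
    · exact Or.inl ⟨b, a, hab.symm, rfl, rfl⟩
    · exact Or.inr (Or.inr ⟨l, rfl, rfl⟩)
    · exact Or.inr (Or.inl ⟨l, rfl, rfl⟩)
  loopless := by
    constructor
    rintro x (⟨a, b, hab, rfl, h⟩ | ⟨l, rfl, h⟩ | ⟨l, rfl, h⟩)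
    · rw [Sum.inl.injEq] at h
      exact TG.loopless.irrefl a (h ▸ hab)
    · exact Sum.inl_ne_inr h
    · exact Sum.inr_ne_inl h

variable {TG t₀}

@[simp] lemma addLeaves_adj_inl_inl {a b : T} :
    (addLeaves TG t₀ (L := L)).Adj (inl a) (inl b) ↔ TG.Adj a b := by
  constructor
  · rintro (⟨a', b', hab, ha, hb⟩ | ⟨l, _, hb⟩ | ⟨l, ha, _⟩)
    · rw [Sum.inl.injEq] at ha hb; rwa [ha, hb]
    · exact absurd hb Sum.inl_ne_inr
    · exact absurd ha Sum.inl_ne_inr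
  · exact fun h => Or.inl ⟨a, b, h, rfl, rfl⟩

@[simp] lemma addLeaves_adj_inl_inr {a : T} {l : L} :
    (addLeaves TG t₀).Adj (inl a) (inr l) ↔ a = t₀ := by
  constructor
  · rintro (⟨a', b', _, _, hb⟩ | ⟨l', ha, _⟩ | ⟨l', ha, _⟩)
    · exact absurd hb Sum.inr_ne_inl
    · exact Sum.inl.inj ha
    · exact absurd ha Sum.inl_ne_inr
  · rintro rfl; exact Or.inr (Or.inl ⟨l, rfl, rfl⟩)

@[simp] lemma addLeaves_adj_inr_inl {a : T} {l : L} :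
    (addLeaves TG t₀).Adj (inr l) (inl a) ↔ a = t₀ := by
  rw [SimpleGraph.adj_comm]; exact addLeaves_adj_inl_inr

@[simp] lemma addLeaves_adj_inr_inr {l l' : L} :
    ¬ (addLeaves TG t₀).Adj (inr l) (inr l') := by
  rintro (⟨a', b', _, ha, _⟩ | ⟨l'', ha, _⟩ | ⟨l'', _, hb⟩)
  · exact Sum.inr_ne_inl ha
  · exact Sum.inr_ne_inl ha
  · exact Sum.inr_ne_inl hb

def leafHom : TG →g (addLeaves TG t₀ (L := L)) where
  toFun := inl
  map_rel' := fun h => Or.inl ⟨_, _, h, rfl, rfl⟩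

lemma exists_last_edge {W : Type} {G : SimpleGraph W} :
    ∀ {a b : W} (p : G.Walk a b), a ≠ b → ∃ x, G.Adj x b ∧ s(x, b) ∈ p.edges := by
  intro a b p
  induction p with
  | nil => exact fun h => absurd rfl h
  | @cons u m b h q ih =>
    intro _
    by_cases hmb : m = b
    · subst hmb
      exact ⟨u, h, by simp⟩
    · obtain ⟨x, hx1, hx2⟩ := ih hmb
      exact ⟨x, hx1, by simp [hx2]⟩

lemma addLeaves_lift :
    ∀ {x y : T ⊕ L} (p : (addLeaves TG t₀ (L := L)).Walk x y)
      (_ : ∀ z ∈ p.support, ∃ c : T, z = inl c) (a b : T) (hx : x = inl a) (hy : y = inl b),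
      ∃ q : TG.Walk a b, q.map (leafHom (L := L)) = p.copy hx hy := by
  intro x y p
  induction p with
  | nil =>
    intro _ a b hx hy
    subst hx
    obtain rfl : a = b := Sum.inl.inj hy
    exact ⟨SimpleGraph.Walk.nil, by simp; rfl⟩
  | @cons x m y h q ih =>
    intro hs a b hx hy
    subst hx
    obtain ⟨c, rfl⟩ : ∃ c, m = inl c := hs m (by simp)
    have hadj : TG.Adj a c := addLeaves_adj_inl_inl.mp h
    obtain ⟨q', hq'⟩ := ih (fun z hz => hs z (by simp [hz])) c b rfl hy
    refine ⟨SimpleGraph.Walk.cons hadj q', ?_⟩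
    rw [SimpleGraph.Walk.map_cons, hq', SimpleGraph.Walk.copy_cons]
    rfl

lemma addLeaves_isTree (hT : TG.IsTree) (t₀ : T) :
    (addLeaves TG t₀ : SimpleGraph (T ⊕ L)).IsTree := by
  classical
  constructor
  · -- connected
    have key : ∀ x : T ⊕ L, (addLeaves TG t₀ (L := L)).Reachable x (inl t₀) := by
      rintro (a | l)
      · exact (hT.isConnected.preconnected a t₀).map (leafHom (L := L))
      · exact SimpleGraph.Adj.reachable (by simp)
    have : Nonempty (T ⊕ L) := ⟨inl t₀⟩
    exact SimpleGraph.Connected.mk (fun x y => (key x).trans (key y).symm)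
  · -- acyclic
    intro v c hc
    rcases Classical.em (∃ l : L, (inr l : T ⊕ L) ∈ c.support) with hr | hr
    · obtain ⟨l, hl⟩ := hr
      have hc' := hc.rotate (u := inr l) hl
      revert hc'
      generalize c.rotate (inr l) hl = c'
      intro hc'
      cases c' with
      | nil => exact hc'.ne_nil rfl
      | @cons _ w _ h1 p =>
        obtain (a | l') := w
        · have ha : a = t₀ := addLeaves_adj_inr_inl.mp h1
          have hne : (inl a : T ⊕ L) ≠ inr l := Sum.inl_ne_inr
          obtain ⟨x, hxadj, hxmem⟩ := exists_last_edge p hne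
          obtain (a' | l'') := x
          · have ha' : a' = t₀ := addLeaves_adj_inl_inr.mp hxadj
            have hnodup := hc'.edges_nodup
            rw [SimpleGraph.Walk.edges_cons, List.nodup_cons] at hnodup
            rw [Sym2.eq_swap, ha'.trans ha.symm] at hxmem
            exact hnodup.1 hxmem
          · exact addLeaves_adj_inr_inr hxadj
        · exact addLeaves_adj_inr_inr h1
    · push_neg at hr
      obtain (a | l) := v
      · have hs : ∀ z ∈ c.support, ∃ c0 : T, z = inl c0 := by
          rintro (b | l') hz
          · exact ⟨b, rfl⟩
          · exact absurd hz (hr l')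
        obtain ⟨q, hq⟩ := addLeaves_lift c hs a a rfl rfl
        rw [SimpleGraph.Walk.copy_rfl_rfl] at hq
        have hqc : q.IsCycle := by
          rw [← SimpleGraph.Walk.map_isCycle_iff_of_injective
            (f := leafHom (L := L)) Sum.inl_injective, hq]
          exact hc
        exact hT.IsAcyclic q hqc
      · exact hr l c.start_mem_support

end AddLeaves

/-- A Boolean CQ `q` is equivalent to some Boolean CQ of tree width at most `k`
(`k ≥ 1`) iff the core of `q` has tree width at most `k`, tree width of a CQ being
that of the Gaifman graph of its canonical database. -/
theorem stmt14 {A R V : Type} [Finite V] (q : DB A R V) (k : ℕ) (hk : 1 ≤ k) :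
    (∃ (V' : Type) (_ : Finite V') (q' : DB A R V'),
        CQEquiv q q' ∧ TreewidthLE (gaifman q') k) ↔
    (∃ S : Set V, IsCore q S ∧ TreewidthLE (gaifman (restrictDB q S)) k) := by
  classical
  constructor
  · rintro ⟨V', _, q', hequiv, T, TG, μ', htree, hcover, hedge, hconn, hcard⟩
    obtain ⟨S, hScore⟩ := exists_core q
    refine ⟨S, hScore, ?_⟩
    -- homomorphisms
    obtain ⟨f, hf⟩ := (hequiv V' q').mpr ⟨id, isHom_id q'⟩
    obtain ⟨g, hg⟩ := (hequiv V q).mp ⟨id, isHom_id q⟩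
    obtain ⟨h, hh⟩ := (hScore.1 V (restrictDB q S)).mpr ⟨id, isHom_id _⟩
    set e : V → V := h ∘ g ∘ f with he_def
    have he : isHom (restrictDB q S) (restrictDB q S) e :=
      isHom_comp (isHom_comp (isHom_of_restrict hf) hg) hh
    -- `S ⊆ e '' S` by minimality of the core
    have himg : S ⊆ e '' S := by
      by_contra hns
      have hsub : S ∩ e '' S ⊂ S := by
        refine ⟨Set.inter_subset_left, fun hcontra => ?_⟩
        exact hns (fun v hv => (hcontra hv).2)
      refine hScore.2 _ hsub ?_
      have he' : isHom (restrictDB q S) (restrictDB q (S ∩ e '' S)) e := by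
        refine ⟨fun a c hc => ?_, fun r c d hd => ?_⟩
        · obtain ⟨h1, h2⟩ := he.1 a c hc
          exact ⟨h1, h2, Set.mem_image_of_mem e hc.2⟩
        · obtain ⟨h1, h2, h3⟩ := he.2 r c d hd
          exact ⟨h1, ⟨h2, Set.mem_image_of_mem e hd.2.1⟩, ⟨h3, Set.mem_image_of_mem e hd.2.2⟩⟩
      intro C D
      constructor
      · rintro ⟨φ, hφ⟩
        exact ⟨φ ∘ e, isHom_comp he' hφ⟩
      · rintro ⟨φ, hφ⟩
        exact ⟨φ ∘ id, isHom_comp (isHom_restrict_mono q Set.inter_subset_left) hφ⟩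
    have himg' : e '' S = S :=
      (Set.eq_of_subset_of_ncard_le himg (Set.ncard_image_le (Set.toFinite S))
        (Set.Finite.image e (Set.toFinite S))).symm
    have hmaps : ∀ v ∈ S, e v ∈ S := fun v hv => himg' ▸ Set.mem_image_of_mem e hv
    -- the restriction of `e` to `S` is a permutation
    set σ : ↥S → ↥S := fun v => ⟨e v.1, hmaps v.1 v.2⟩ with hσ
    have hσsurj : Function.Surjective σ := by
      rintro ⟨v, hv⟩
      obtain ⟨u, hu, huv⟩ := himg hv
      exact ⟨⟨u, hu⟩, Subtype.ext huv⟩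
    have hσbij : Function.Bijective σ := ⟨Finite.injective_iff_surjective.mpr hσsurj, hσsurj⟩
    set σe := Equiv.ofBijective σ hσbij with hσe
    have hiter : ∀ (n : ℕ) (v : ↥S), ((σe ^ n) v : V) = e^[n] (v : V) := by
      intro n
      induction n with
      | zero => intro v; simp
      | succ n ih =>
        intro v
        rw [pow_succ', Equiv.Perm.mul_apply]
        have hcoe : ((σe ((σe ^ n) v)) : V) = e (((σe ^ n) v : ↥S) : V) := rfl
        rw [hcoe, ih v]
        exact (Function.iterate_succ_apply' e n v).symm
    set m := orderOf σe with hm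
    have hm1 : 1 ≤ m := orderOf_pos σe
    have hfix : ∀ v ∈ S, e^[m] v = v := by
      intro v hv
      have h1 : σe ^ m = 1 := pow_orderOf_eq_one σe
      have h2 := hiter m ⟨v, hv⟩
      rw [h1] at h2
      exact h2.symm
    have hπf : ∀ v ∈ S, e^[m-1] (h (g (f v))) = v := by
      intro v hv
      obtain ⟨m', hm'⟩ : ∃ m', m = m' + 1 := ⟨m - 1, by omega⟩
      have : e^[m-1] (e v) = v := by
        have h3 : e^[m' + 1] v = e^[m'] (e v) := Function.iterate_succ_apply e m' v
        rw [show m - 1 = m' from by omega, ← h3, ← hm']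
        exact hfix v hv
      exact this
    have hinjf : ∀ u ∈ S, ∀ v ∈ S, f u = f v → u = v := by
      intro u hu v hv hfe
      rw [← hπf u hu, ← hπf v hv, hfe]
    have hfhom : isHom (restrictDB q S) q' f := isHom_of_restrict hf
    -- build the tree decomposition
    have t₀ : T := htree.isConnected.nonempty.some
    refine ⟨T ⊕ {v : V // v ∉ S}, addLeaves TG t₀,
      fun x => Sum.rec (fun t => (Set.toFinite {v | v ∈ S ∧ f v ∈ μ' t}).toFinset)
        (fun l => {l.1}) x,
      addLeaves_isTree htree t₀, ?_, ?_, ?_, ?_⟩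
    · -- coverage
      intro v
      by_cases hv : v ∈ S
      · obtain ⟨t, ht⟩ := hcover (f v)
        exact ⟨Sum.inl t, by simp [Set.Finite.mem_toFinset, hv, ht]⟩
      · exact ⟨Sum.inr ⟨v, hv⟩, by simp⟩
    · -- edges
      rintro u v ⟨hne, r, hcase⟩
      have huS : u ∈ S := by rcases hcase with h' | h'; exacts [h'.2.1, h'.2.2]
      have hvS : v ∈ S := by rcases hcase with h' | h'; exacts [h'.2.2, h'.2.1]
      have hfne : f u ≠ f v := fun hEq => hne (hinjf u huS v hvS hEq)
      have hadj' : (gaifman q').Adj (f u) (f v) := by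
        refine ⟨hfne, r, ?_⟩
        rcases hcase with h' | h'
        · exact Or.inl (hfhom.2 r u v h')
        · exact Or.inr (hfhom.2 r v u h')
      obtain ⟨t, h1, h2⟩ := hedge _ _ hadj'
      exact ⟨Sum.inl t, by simp [Set.Finite.mem_toFinset, huS, h1],
        by simp [Set.Finite.mem_toFinset, hvS, h2]⟩
    · -- connectivity
      intro v
      by_cases hv : v ∈ S
      · refine SimpleGraph.Connected.map
          (G := TG.induce {t | f v ∈ μ' t}) ⟨fun t => ⟨Sum.inl t.1, ?_⟩, ?_⟩ ?_ (hconn (f v))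
        · exact Set.mem_setOf_eq ▸ (Set.Finite.mem_toFinset _).mpr ⟨hv, t.2⟩
        · intro a b hab
          exact addLeaves_adj_inl_inl.mpr hab
        · rintro ⟨x, hx⟩
          obtain (t | l) := x
          · rw [Set.mem_setOf_eq] at hx
            rw [Set.Finite.mem_toFinset] at hx
            exact ⟨⟨t, hx.2⟩, rfl⟩
          · rw [Set.mem_setOf_eq] at hx
            rw [Finset.mem_singleton] at hx
            exact absurd (hx ▸ hv) l.2
      · have hkey : ∀ x : T ⊕ {w : V // w ∉ S},
            v ∈ (Sum.rec (fun t => (Set.toFinite {w | w ∈ S ∧ f w ∈ μ' t}).toFinset)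
              (fun l => {l.1}) x : Finset V) → x = Sum.inr ⟨v, hv⟩ := by
          rintro (t | l) hx
          · rw [Set.Finite.mem_toFinset] at hx
            exact absurd hx.1 hv
          · rw [Finset.mem_singleton] at hx
            exact congrArg Sum.inr (Subtype.ext hx.symm)
        rw [SimpleGraph.connected_iff]
        refine ⟨fun x y => ?_, ⟨⟨Sum.inr ⟨v, hv⟩, by simp⟩⟩⟩
        have hx := hkey x.1 x.2
        have hy := hkey y.1 y.2
        rw [show x = y from Subtype.ext (hx.trans hy.symm)]
    · -- bag sizes
      rintro (t | l)
      · have : ((Set.toFinite {v | v ∈ S ∧ f v ∈ μ' t}).toFinset).card ≤ (μ' t).card := by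
          refine Finset.card_le_card_of_injOn f ?_ ?_
          · intro v hvmem
            rw [Finset.mem_coe, Set.Finite.mem_toFinset] at hvmem
            exact hvmem.2
          · intro u hu v hv hfe
            simp only [Finset.mem_coe, Set.Finite.mem_toFinset] at hu hv
            exact hinjf u hu.1 v hv.1 hfe
        exact this.trans (hcard t)
      · simp
  · rintro ⟨S, hScore, htw⟩
    exact ⟨V, inferInstance, restrictDB q S, hScore.1, htw⟩
end
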